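/- arXiv:2009.09031 — 7 statements merged into one kernel-verified Lean document; each statement's English description precedes it below -/
import Mathlib

section
/- Let S, D, Df be Boolean variables and X range over a finite nonempty type. Let p be a probability mass function on S×X×D under which D is independent of S (i.e., for all s,d: Pr_p(S=s, D=d) = Pr_p(S=s)·Pr_p(D=d)). Then there exists a probability mass function q on S×X×D×Df such that: (i) the marginal of q over (S,X,D) equals p; (ii) q assigns probability 1 to the event Df = D; and (iii) q satisfies the fair-model independencies. In particular, every fair distribution without a latent decision variable is the marginal of a latent-fair-decision model. -/
/-- A probability mass function on a finite type: nonnegative and sums to one. -/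
def IsPMF {α : Type*} [Fintype α] (p : α → ℝ) : Prop :=
  (∀ a, 0 ≤ p a) ∧ ∑ a, p a = 1

/-- `q` over `S × X × D × Df` satisfies the fair-model independencies:
`q(s,x,d,df) = q_S(s) · q_F(df) · a(x|s,df) · b(d|s,df)` where `q_S`, `q_F` are the
marginals of `q` over `S` and `Df`, and `a(·|s,df)`, `b(·|s,df)` are families of
conditional pmfs over `X` and `D`. -/
def FairIndep {X : Type*} [Fintype X] (q : Bool × X × Bool × Bool → ℝ) : Prop :=
  ∃ (a : Bool → Bool → X → ℝ) (b : Bool → Bool → Bool → ℝ),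
    (∀ s df x, 0 ≤ a s df x) ∧ (∀ s df, ∑ x, a s df x = 1) ∧
    (∀ s df d, 0 ≤ b s df d) ∧ (∀ s df, ∑ d, b s df d = 1) ∧
    (∀ s x d df, q (s, x, d, df) =
      (∑ x', ∑ d', ∑ df', q (s, x', d', df')) *
      (∑ s', ∑ x', ∑ d', q (s', x', d', df)) * a s df x * b s df d)

/-- Every fair distribution `p` over `(S, X, D)` (i.e. with `D ⫫ S`) is the marginal of a
latent-fair-decision model: there is a pmf `q` over `(S, X, D, Df)` satisfying the fair-model
independencies, whose `(S,X,D)`-marginal is `p` and which assigns probability 1 to `Df = D`. -/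
theorem fair_dist_is_marginal_of_latent_fair_model
    {X : Type*} [Fintype X] [Nonempty X]
    (p : Bool × X × Bool → ℝ) (hp : IsPMF p)
    (hindep : ∀ s d : Bool,
      (∑ x, p (s, x, d)) =
        (∑ x, ∑ d', p (s, x, d')) * (∑ s', ∑ x, p (s', x, d))) :
    ∃ q : Bool × X × Bool × Bool → ℝ,
      IsPMF q ∧
      (∀ (s : Bool) (x : X) (d : Bool), ∑ df, q (s, x, d, df) = p (s, x, d)) ∧
      (∑ s, ∑ x, ∑ d, q (s, x, d, d) = 1) ∧
      FairIndep q := by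
  obtain ⟨hp0, hp1⟩ := hp
  set q : Bool × X × Bool × Bool → ℝ :=
    fun t => if t.2.2.2 = t.2.2.1 then p (t.1, t.2.1, t.2.2.1) else 0 with hq
  have hq0 : ∀ t, 0 ≤ q t := by
    intro t; rw [hq]; dsimp only; split
    · exact hp0 _
    · exact le_refl 0
  have hqv : ∀ s x d df, q (s, x, d, df) = if df = d then p (s, x, d) else 0 := by
    intro s x d df; rfl
  have hmarg : ∀ (s : Bool) (x : X) (d : Bool), ∑ df, q (s, x, d, df) = p (s, x, d) := by
    intro s x d
    simp only [hqv, Fintype.sum_bool]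
    cases d <;> simp
  have hsum : ∑ t, q t = 1 := by
    rw [← hp1]
    simp_rw [Fintype.sum_prod_type, hmarg]
  have hzero : ∀ s df, (∑ x, ∑ d, p (s, x, d)) * (∑ s', ∑ x, p (s', x, df)) = 0 →
      ∀ x, p (s, x, df) = 0 := by
    intro s df h x
    have h2 : ∑ x, p (s, x, df) = 0 := by rw [hindep s df, h]
    have := (Finset.sum_eq_zero_iff_of_nonneg (fun i _ => hp0 (s, i, df))).mp h2
    exact this x (Finset.mem_univ x)
  refine ⟨q, ⟨hq0, hsum⟩, hmarg, ?_, ?_⟩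
  · rw [← hp1]
    simp_rw [Fintype.sum_prod_type]
    simp [hqv]
  · -- FairIndep
    set pS : Bool → ℝ := fun s => ∑ x, ∑ d, p (s, x, d) with hpS
    set pD : Bool → ℝ := fun d => ∑ s, ∑ x, p (s, x, d) with hpD
    have hpSnn : ∀ s, 0 ≤ pS s :=
      fun s => Finset.sum_nonneg fun x _ => Finset.sum_nonneg fun d _ => hp0 _
    have hpDnn : ∀ d, 0 ≤ pD d :=
      fun d => Finset.sum_nonneg fun s _ => Finset.sum_nonneg fun x _ => hp0 _
    refine ⟨fun s df x => if pS s * pD df = 0 then (Fintype.card X : ℝ)⁻¹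
        else p (s, x, df) / (pS s * pD df),
      fun s df d => if d = df then 1 else 0, ?_, ?_, ?_, ?_, ?_⟩
    · intro s df x; dsimp only; split
      · positivity
      · rename_i h
        have : 0 < pS s * pD df := lt_of_le_of_ne (mul_nonneg (hpSnn s) (hpDnn df)) (Ne.symm h)
        exact div_nonneg (hp0 _) this.le
    · intro s df; dsimp only; split
      · rw [Finset.sum_const, Finset.card_univ, nsmul_eq_mul]
        rw [mul_inv_cancel₀]
        exact Nat.cast_ne_zero.mpr Fintype.card_ne_zero
      · rename_i h
        rw [← Finset.sum_div]
        have hne : (∑ x, p (s, x, df)) ≠ 0 := by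
          rw [hindep s df]; exact h
        rw [hindep s df]
        exact div_self h
    · intro s df d; dsimp only; split
      · exact zero_le_one
      · exact le_refl 0
    · intro s df; cases df <;> simp [Fintype.sum_bool]
    · intro s x d df
      have hqS : ∑ x', ∑ d', ∑ df', q (s, x', d', df') = pS s := by
        simp_rw [hmarg]
        rfl
      have hqD : ∑ s', ∑ x', ∑ d', q (s', x', d', df) = pD df := by
        cases df <;> simp [hqv, Fintype.sum_bool, hpD]
      rw [hqS, hqD, hqv]
      dsimp only
      by_cases hdf : df = d
      · subst hdf
        by_cases hz : pS s * pD df = 0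
        · simp [hz, hzero s df hz x]
        · rw [if_pos rfl, if_neg hz, if_pos rfl, mul_one]
          field_simp
          rw [mul_assoc, mul_div_assoc, div_self hz, mul_one]
      · have hdf' : d ≠ df := fun h => hdf h.symm
        simp [hdf, hdf']
end

section
/- Let S, D, Df be Boolean variables and X range over a finite nonempty type. Let q be a probability mass function on S×X×D×Df satisfying the fair-model independencies with conditional pmfs a(·|s,df) for X and b(·|s,df) for D, and suppose moreover that b(d|s,df) = 1 if d = df and 0 otherwise (i.e., q assigns probability 1 to the event D = Df). Then the marginal r of q over (S,X,D) factorizes as r(s,x,d) = r_S(s) · r_D(d) · r(x | s,d) for all (s,x,d) with r_S(s)·r_D(d) > 0, where r_S and r_D are the marginals of r over S and D and r(·|s,d) is the conditional pmf of X given (S,D)=(s,d). In particular, D is independent of S under r. -/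
/-- Marginal of `q : S × X × D × Df → ℝ` over `(S, X, D)`. -/
def marg3 {X : Type*} [Fintype X] (q : Bool × X × Bool × Bool → ℝ) :
    Bool × X × Bool → ℝ :=
  fun w => ∑ df, q (w.1, w.2.1, w.2.2, df)

/-- Marginal over `S` of a pmf on `S × X × D`. -/
def margS {X : Type*} [Fintype X] (r : Bool × X × Bool → ℝ) : Bool → ℝ :=
  fun s => ∑ x, ∑ d, r (s, x, d)

/-- Marginal over `D` of a pmf on `S × X × D`. -/
def margD {X : Type*} [Fintype X] (r : Bool × X × Bool → ℝ) : Bool → ℝ :=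
  fun d => ∑ s, ∑ x, r (s, x, d)

/-- Marginal over `(S, D)` of a pmf on `S × X × D`. -/
def margSD {X : Type*} [Fintype X] (r : Bool × X × Bool → ℝ) : Bool → Bool → ℝ :=
  fun s d => ∑ x, r (s, x, d)

/-- If `q` over `(S, X, D, Df)` satisfies the fair-model independencies with conditional pmf
families `a(·|s,df)` over `X` and `b(·|s,df)` over `D`, and moreover `b(d|s,df) = [d = df]`
(so `q` assigns probability 1 to `D = Df`), then the marginal `r` of `q` over `(S, X, D)`
factorizes as `r(s,x,d) = r_S(s) · r_D(d) · r(x|s,d)` whenever `r_S(s) · r_D(d) > 0`;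
in particular `D` and `S` are independent under `r`. -/
theorem latent_fair_model_det_b_marginal_factorizes
    {X : Type*} [Fintype X] [Nonempty X]
    (q : Bool × X × Bool × Bool → ℝ) (hq : IsPMF q)
    (a : Bool → Bool → X → ℝ) (b : Bool → Bool → Bool → ℝ)
    (ha0 : ∀ s df x, 0 ≤ a s df x) (ha1 : ∀ s df, ∑ x, a s df x = 1)
    (hb0 : ∀ s df d, 0 ≤ b s df d) (hb1 : ∀ s df, ∑ d, b s df d = 1)
    (hfact : ∀ (s : Bool) (x : X) (d df : Bool),
      q (s, x, d, df) =
        (∑ x', ∑ d', ∑ df', q (s, x', d', df')) *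
        (∑ s', ∑ x', ∑ d', q (s', x', d', df)) * a s df x * b s df d)
    (hbdet : ∀ s df d : Bool, b s df d = if d = df then 1 else 0) :
    (∀ (s : Bool) (x : X) (d : Bool),
      0 < margS (marg3 q) s * margD (marg3 q) d →
        marg3 q (s, x, d) =
          margS (marg3 q) s * margD (marg3 q) d *
            (marg3 q (s, x, d) / margSD (marg3 q) s d)) ∧
    (∀ s d : Bool, margSD (marg3 q) s d = margS (marg3 q) s * margD (marg3 q) d) := by
  classical
  set qS : Bool → ℝ := fun s => ∑ x', ∑ d', ∑ df', q (s, x', d', df') with hqSdef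
  set qF : Bool → ℝ := fun df => ∑ s', ∑ x', ∑ d', q (s', x', d', df) with hqFdef
  have hq' : ∀ s x d df, q (s, x, d, df)
      = qS s * qF df * a s df x * (if d = df then 1 else 0) := by
    intro s x d df
    rw [hfact, hbdet]
  have hm3 : ∀ s x d, marg3 q (s, x, d) = qS s * qF d * a s d x := by
    intro s x d
    simp only [marg3]
    rw [Fintype.sum_bool]
    cases d <;> simp [hq']
  have hsumS : qS false + qS true = 1 := by
    have h := hq.2
    rw [Fintype.sum_prod_type, Fintype.sum_bool] at h
    have e : ∀ s, (∑ p : X × Bool × Bool, q (s, p)) = ∑ x, ∑ d, ∑ df, q (s, x, d, df) := by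
      intro s; rw [Fintype.sum_prod_type]
      exact Finset.sum_congr rfl fun x _ => by rw [Fintype.sum_prod_type]
    rw [e, e] at h
    simp only [hqSdef]
    linarith
  have hsumF : qF false + qF true = 1 := by
    have h := hq.2
    rw [Fintype.sum_prod_type] at h
    have : ∀ s, (∑ p : X × Bool × Bool, q (s, p)) = ∑ x, ∑ d, ∑ df, q (s, x, d, df) := by
      intro s; rw [Fintype.sum_prod_type]
      exact Finset.sum_congr rfl fun x _ => by rw [Fintype.sum_prod_type]
    simp only [this] at h
    have hswap : ∀ s : Bool, (∑ x, ∑ d, ∑ df, q (s, x, d, df))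
        = ∑ x, (q (s, x, false, false) + q (s, x, false, true)
          + (q (s, x, true, false) + q (s, x, true, true))) := by
      intro s
      refine Finset.sum_congr rfl fun x _ => ?_
      rw [Fintype.sum_bool, Fintype.sum_bool, Fintype.sum_bool]; ring
    rw [Fintype.sum_bool, hswap, hswap] at h
    simp only [hqFdef]
    rw [Fintype.sum_bool, Fintype.sum_bool]
    have e1 : ∀ s d, (∑ x, ∑ d', q (s, x, d', d)) = ∑ x, (q (s, x, false, d) + q (s, x, true, d)) := by
      intro s d
      refine Finset.sum_congr rfl fun x _ => ?_
      rw [Fintype.sum_bool]; ring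
    simp only [e1]
    simp only [Finset.sum_add_distrib] at h ⊢
    linarith
  have hmSD : ∀ s d, margSD (marg3 q) s d = qS s * qF d := by
    intro s d
    simp only [margSD, hm3, ← Finset.mul_sum, ha1, mul_one]
  have hmS : ∀ s, margS (marg3 q) s = qS s := by
    intro s
    simp only [margS, hm3]
    have : ∀ x : X, (∑ d, qS s * qF d * a s d x)
        = qS s * qF false * a s false x + qS s * qF true * a s true x := by
      intro x; rw [Fintype.sum_bool]; ring
    simp only [this, Finset.sum_add_distrib, ← Finset.mul_sum, ha1]
    linear_combination qS s * hsumF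
  have hmD : ∀ d, margD (marg3 q) d = qF d := by
    intro d
    simp only [margD, hm3]
    rw [Fintype.sum_bool]
    simp only [← Finset.mul_sum, ha1, mul_one]
    linear_combination qF d * hsumS
  have key : ∀ s d, margSD (marg3 q) s d = margS (marg3 q) s * margD (marg3 q) d := by
    intro s d; rw [hmSD, hmS, hmD]
  refine ⟨fun s x d hpos => ?_, key⟩
  have hMne : margSD (marg3 q) s d ≠ 0 := by
    rw [key]; exact ne_of_gt hpos
  rw [key s d] at hMne ⊢
  field_simp
  exact (eq_div_iff hMne).mpr (by ring)
end

section
/- There exists a probability mass function q over S×X×D×Df, with S, X, D, Df all Boolean, that satisfies the fair-model independencies and whose marginal over (S,D) has Pr_q(S=0) > 0, Pr_q(S=1) > 0, and Pr_q(D=1 | S=1) ≠ Pr_q(D=1 | S=0). Hence the latent-fair-decision model can also represent distributions in which the observed label D depends on the sensitive attribute S, so its family of marginals over (S,X,D) strictly contains the family of distributions in which D is independent of S. -/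
/-- There is a pmf `q` over `S × X × D × Df` (all Boolean) satisfying the fair-model
independencies whose `(S, D)`-marginal has `Pr(S=0) > 0`, `Pr(S=1) > 0` and
`Pr(D=1 | S=1) ≠ Pr(D=1 | S=0)`: the latent-fair-decision model can represent
distributions in which the observed label `D` depends on the sensitive attribute `S`. -/
theorem latent_fair_model_can_have_dependent_observed_label :
    ∃ q : Bool × Bool × Bool × Bool → ℝ,
      IsPMF q ∧ FairIndep q ∧
      (0 < ∑ x, ∑ d, ∑ df, q (false, x, d, df)) ∧
      (0 < ∑ x, ∑ d, ∑ df, q (true, x, d, df)) ∧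
      (∑ x, ∑ df, q (true, x, true, df)) / (∑ x, ∑ d, ∑ df, q (true, x, d, df)) ≠
        (∑ x, ∑ df, q (false, x, true, df)) / (∑ x, ∑ d, ∑ df, q (false, x, d, df)) := by
  refine ⟨fun p => if p.2.2.1 = p.1 then (1/8 : ℝ) else 0, ⟨?_, ?_⟩,
    ⟨fun _ _ _ => 1/2, fun s df d => if d = s then 1 else 0, ?_, ?_, ?_, ?_, ?_⟩,
    ?_, ?_, ?_⟩
  · intro a; dsimp only; split <;> norm_num
  · simp [Fintype.sum_prod_type, Fintype.sum_bool]; norm_num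
  · intro s df x; norm_num
  · intro s df; simp [Fintype.sum_bool]
  · intro s df d; dsimp only; split <;> norm_num
  · intro s df; cases s <;> simp [Fintype.sum_bool]
  · intro s x d df; cases s <;> cases d <;> simp [Fintype.sum_bool] <;> norm_num
  · simp [Fintype.sum_bool]
  · simp [Fintype.sum_bool]
  · simp [Fintype.sum_bool]
end

section
/- Let X range over a finite nonempty type, let S and D be Boolean, and let p be a probability mass function on X×S×D with Pr_p(S=1) > 0 and Pr_p(S=0) > 0. Let f(x,s) = Pr_p(D=1 | X=x, S=s) whenever Pr_p(X=x, S=s) > 0 (f arbitrary elsewhere). Then the following are equivalent: (i) f satisfies generalized demographic parity with respect to the marginal of p over (X,S); (ii) Pr_p(D=1 | S=1) = Pr_p(D=1 | S=0); (iii) D and S are independent under p, i.e., Pr_p(S=s, D=d) = Pr_p(S=s)·Pr_p(D=d) for all s,d. -/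
/-- Let `p` be a pmf on `X × S × D` (`S`, `D` Boolean) with both groups of positive
probability, and let `f(x,s) = Pr_p(D=1 | X=x, S=s)` whenever `Pr_p(X=x, S=s) > 0`
(`f` arbitrary elsewhere).  Then the following are equivalent:
(i) `f` satisfies generalized demographic parity w.r.t. the `(X,S)`-marginal of `p`;
(ii) `Pr_p(D=1 | S=1) = Pr_p(D=1 | S=0)`;
(iii) `D` and `S` are independent under `p`. -/
theorem demographic_parity_tfae
    {X : Type*} [Fintype X] [Nonempty X]
    (p : X × Bool × Bool → ℝ) (hp : IsPMF p)
    (hs1 : 0 < ∑ x, ∑ d, p (x, true, d))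
    (hs0 : 0 < ∑ x, ∑ d, p (x, false, d))
    (f : X × Bool → ℝ)
    (hf : ∀ (x : X) (s : Bool), 0 < ∑ d, p (x, s, d) →
      f (x, s) = p (x, s, true) / ∑ d, p (x, s, d)) :
    (((∑ x, (∑ d, p (x, true, d)) * f (x, true)) / (∑ x, ∑ d, p (x, true, d)) =
        (∑ x, (∑ d, p (x, false, d)) * f (x, false)) / (∑ x, ∑ d, p (x, false, d))) ↔
      ((∑ x, p (x, true, true)) / (∑ x, ∑ d, p (x, true, d)) =
        (∑ x, p (x, false, true)) / (∑ x, ∑ d, p (x, false, d)))) ∧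
    (((∑ x, p (x, true, true)) / (∑ x, ∑ d, p (x, true, d)) =
        (∑ x, p (x, false, true)) / (∑ x, ∑ d, p (x, false, d))) ↔
      (∀ s d : Bool, (∑ x, p (x, s, d)) =
        (∑ x, ∑ d', p (x, s, d')) * (∑ x, ∑ s', p (x, s', d)))) := by
  obtain ⟨hpos, hsum⟩ := hp
  -- numerator identity
  have key : ∀ s : Bool, (∑ x, (∑ d, p (x, s, d)) * f (x, s)) = ∑ x, p (x, s, true) := by
    intro s
    refine Finset.sum_congr rfl fun x _ => ?_
    rcases lt_or_eq_of_le (Finset.sum_nonneg fun d _ => hpos (x, s, d)) with h | h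
    · rw [hf x s h, mul_comm, div_mul_cancel₀ _ h.ne']
    · have hz : ∀ d, p (x, s, d) = 0 := by
        intro d
        have := (Finset.sum_eq_zero_iff_of_nonneg (fun d _ => hpos (x, s, d))).1 h.symm
        exact this d (Finset.mem_univ d)
      simp [← h, hz]
  -- abbreviations
  set qtt := ∑ x, p (x, true, true) with hqtt
  set qtf := ∑ x, p (x, true, false) with hqtf
  set qft := ∑ x, p (x, false, true) with hqft
  set qff := ∑ x, p (x, false, false) with hqff
  have hA : (∑ x, ∑ d, p (x, true, d)) = qtt + qtf := by
    rw [hqtt, hqtf, ← Finset.sum_add_distrib]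
    exact Finset.sum_congr rfl fun x _ => by simp [Fintype.sum_bool, add_comm]
  have hB : (∑ x, ∑ d, p (x, false, d)) = qft + qff := by
    rw [hqft, hqff, ← Finset.sum_add_distrib]
    exact Finset.sum_congr rfl fun x _ => by simp [Fintype.sum_bool, add_comm]
  have hDt : (∑ x, ∑ s', p (x, s', true)) = qtt + qft := by
    rw [hqtt, hqft, ← Finset.sum_add_distrib]
    exact Finset.sum_congr rfl fun x _ => by simp [Fintype.sum_bool, add_comm]
  have hDf : (∑ x, ∑ s', p (x, s', false)) = qtf + qff := by
    rw [hqtf, hqff, ← Finset.sum_add_distrib]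
    exact Finset.sum_congr rfl fun x _ => by simp [Fintype.sum_bool, add_comm]
  have htot : qtt + qtf + (qft + qff) = 1 := by
    rw [← hA, ← hB, ← hsum, Fintype.sum_prod_type, ← Finset.sum_add_distrib]
    refine (Finset.sum_congr rfl fun x _ => ?_).symm
    rw [Fintype.sum_prod_type]
    simp [Fintype.sum_bool, add_comm]
  rw [hA] at hs1
  rw [hB] at hs0
  constructor
  · rw [key true, key false]
  · rw [hA, hB]
    constructor
    · intro h
      have h' : qtt * (qft + qff) = qft * (qtt + qtf) := by
        field_simp at h
        linarith [h]
      intro s d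
      cases s <;> cases d <;>
        simp only [hA, hB, hDt, hDf, ← hqtt, ← hqtf, ← hqft, ← hqff]
      · linear_combination (-qff) * htot + h'
      · linear_combination (-qft) * htot - h'
      · linear_combination (-qtf) * htot - h'
      · linear_combination (-qtt) * htot + h'
    · intro h
      have h1 := h true true
      have h2 := h false true
      rw [hA, hDt, ← hqtt] at h1
      rw [hB, hDt, ← hqft] at h2
      rw [div_eq_div_iff hs1.ne' hs0.ne']
      linear_combination (qft + qff) * h1 - (qtt + qtf) * h2
end

section
/- Let X range over a finite nonempty type, let S and Df be Boolean, and let q be a probability mass function over X×S×Df with Pr_q(S=1) > 0 and Pr_q(S=0) > 0, under which Df is independent of S (Pr_q(S=s, Df=df) = Pr_q(S=s)·Pr_q(Df=df) for all s,df). Let f(x,s) = Pr_q(Df=1 | X=x, S=s) whenever Pr_q(X=x, S=s) > 0 (f arbitrary elsewhere). Then f satisfies generalized demographic parity with respect to the marginal of q over (X,S); moreover E_q[f(X,S) | S=1] = E_q[f(X,S) | S=0] = Pr_q(Df=1). -/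
/-- Let `q` be a pmf over `X × S × Df` (`S`, `Df` Boolean) with both groups of positive
probability, under which `Df` is independent of `S`, and let
`f(x,s) = Pr_q(Df=1 | X=x, S=s)` whenever `Pr_q(X=x, S=s) > 0` (`f` arbitrary elsewhere).
Then `f` satisfies generalized demographic parity w.r.t. the `(X,S)`-marginal of `q`;
indeed both group-conditional expectations equal `Pr_q(Df = 1)`. -/
theorem latent_fair_classifier_satisfies_demographic_parity
    {X : Type*} [Fintype X] [Nonempty X]
    (q : X × Bool × Bool → ℝ) (hq : IsPMF q)
    (hs1 : 0 < ∑ x, ∑ df, q (x, true, df))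
    (hs0 : 0 < ∑ x, ∑ df, q (x, false, df))
    (hindep : ∀ s df : Bool, (∑ x, q (x, s, df)) =
      (∑ x, ∑ df', q (x, s, df')) * (∑ x, ∑ s', q (x, s', df)))
    (f : X × Bool → ℝ)
    (hf : ∀ (x : X) (s : Bool), 0 < ∑ df, q (x, s, df) →
      f (x, s) = q (x, s, true) / ∑ df, q (x, s, df)) :
    (∑ x, (∑ df, q (x, true, df)) * f (x, true)) / (∑ x, ∑ df, q (x, true, df)) =
        (∑ x, ∑ s, q (x, s, true)) ∧
    (∑ x, (∑ df, q (x, false, df)) * f (x, false)) / (∑ x, ∑ df, q (x, false, df)) =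
        (∑ x, ∑ s, q (x, s, true)) := by
  have key : ∀ s : Bool, 0 < (∑ x, ∑ df, q (x, s, df)) →
      (∑ x, (∑ df, q (x, s, df)) * f (x, s)) / (∑ x, ∑ df, q (x, s, df)) =
        (∑ x, ∑ s', q (x, s', true)) := by
    intro s hs
    have hterm : ∀ x : X, (∑ df, q (x, s, df)) * f (x, s) = q (x, s, true) := by
      intro x
      rcases lt_or_eq_of_le (Finset.sum_nonneg fun df _ => hq.1 (x, s, df)) with h | h
      · rw [hf x s h, mul_div_cancel₀ _ (ne_of_gt h)]
      · have h1 : q (x, s, true) = 0 := by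
          have := Finset.sum_eq_zero_iff_of_nonneg (fun df _ => hq.1 (x, s, df)) |>.mp h.symm
          exact this true (Finset.mem_univ _)
        rw [← h, h1, zero_mul]
    rw [Finset.sum_congr rfl fun x _ => hterm x, hindep s true,
      mul_comm, mul_div_assoc, div_self (ne_of_gt hs), mul_one]
  exact ⟨key true hs1, key false hs0⟩
end

section
/- EM monotonicity for a deterministic mixture: let (Z, C, {A_c}, {p_c}) be a deterministic mixture, let E_1, …, E_N ⊆ Z with N ≥ 1 be observed events, and let θ be mixture weights in the probability simplex with Pr_θ(E_i) > 0 for all i. Let θ*_c = (Σ_{i=1}^N Pr_θ(A_c | E_i)) / N be the EM update given by the normalized expected flows. Then the marginal likelihood of the observed data does not decrease: Π_{i=1}^N Pr_{θ*}(E_i) ≥ Π_{i=1}^N Pr_θ(E_i). -/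
/-- The expected flow of component `c` for a mixture with components `p`, weights `θ`, and
observed events `E_1, …, E_N`: `EF_c = ∑_i Pr_θ(A_c | E_i) = ∑_i θ_c · p_c(E_i) / Pr_θ(E_i)`. -/
noncomputable def expFlow {Z C : Type*} [Fintype Z] [Fintype C]
    (p : C → Z → ℝ) (θ : C → ℝ) (N : ℕ) (E : Fin N → Finset Z) : C → ℝ :=
  fun c => ∑ i, θ c * (∑ z ∈ E i, p c z) / (∑ z ∈ E i, ∑ c', θ c' * p c' z)

/-- EM monotonicity for a deterministic mixture: given a deterministic mixture
`(Z, C, {A_c}, {p_c})`, observed events `E_1, …, E_N` (`N ≥ 1`) and current weights `θ` in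
the simplex with `Pr_θ(E_i) > 0` for all `i`, the EM update `θ*_c = (∑_i Pr_θ(A_c | E_i))/N`
given by the normalized expected flows does not decrease the marginal likelihood of the
observed data: `∏_i Pr_{θ*}(E_i) ≥ ∏_i Pr_θ(E_i)`. -/
theorem em_update_does_not_decrease_likelihood
    {Z C : Type*} [Fintype Z] [DecidableEq Z] [Fintype C]
    (A : C → Finset Z) (hA : ∀ z : Z, ∃! c : C, z ∈ A c)
    (p : C → Z → ℝ) (hp : ∀ c, IsPMF (p c))
    (hsupp : ∀ (c : C) (z : Z), z ∉ A c → p c z = 0)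
    (N : ℕ) (hN : 1 ≤ N) (E : Fin N → Finset Z)
    (θ : C → ℝ) (hθ0 : ∀ c, 0 ≤ θ c) (hθ1 : ∑ c, θ c = 1)
    (hposE : ∀ i : Fin N, 0 < ∑ z ∈ E i, ∑ c, θ c * p c z) :
    ∏ i, ∑ z ∈ E i, ∑ c, (expFlow p θ N E c / (N : ℝ)) * p c z ≥
      ∏ i, ∑ z ∈ E i, ∑ c, θ c * p c z := by
  classical
  set D : Fin N → ℝ := fun i => ∑ z ∈ E i, ∑ c, θ c * p c z with hDdef
  set P : C → Fin N → ℝ := fun c i => ∑ z ∈ E i, p c z with hPdef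
  have hD : ∀ i, 0 < D i := hposE
  have hP0 : ∀ c i, 0 ≤ P c i := fun c i => Finset.sum_nonneg fun z _ => (hp c).1 z
  set s : C → ℝ := fun c => ∑ i, P c i / D i with hsdef
  have hs0 : ∀ c, 0 ≤ s c := fun c =>
    Finset.sum_nonneg fun i _ => div_nonneg (hP0 c i) (hD i).le
  have hNpos : (0 : ℝ) < N := by exact_mod_cast hN
  set t : C → ℝ := fun c => s c / N with htdef
  have ht0 : ∀ c, 0 ≤ t c := fun c => div_nonneg (hs0 c) hNpos.le
  set w : C → ℝ := fun c => θ c * t c with hwdef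
  have hw0 : ∀ c, 0 ≤ w c := fun c => mul_nonneg (hθ0 c) (ht0 c)
  have hDsum : ∀ i, D i = ∑ c, θ c * P c i := by
    intro i
    simp only [hDdef, hPdef, Finset.mul_sum]
    exact Finset.sum_comm
  have hEF : ∀ c, expFlow p θ N E c = θ c * s c := by
    intro c
    show (∑ i, θ c * P c i / D i) = θ c * s c
    rw [hsdef, Finset.mul_sum]
    exact Finset.sum_congr rfl fun i _ => mul_div_assoc _ _ _
  set q : Fin N → C → ℝ := fun i c => θ c * P c i / D i with hqdef
  have hq0 : ∀ i c, 0 ≤ q i c := fun i c =>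
    div_nonneg (mul_nonneg (hθ0 c) (hP0 c i)) (hD i).le
  have hqsum : ∀ i, ∑ c, q i c = 1 := by
    intro i
    simp only [hqdef]
    rw [← Finset.sum_div, ← hDsum i, div_self (hD i).ne']
  have hqs : ∀ c, ∑ i, q i c = θ c * s c := by
    intro c
    show (∑ i, θ c * P c i / D i) = θ c * s c
    rw [hsdef, Finset.mul_sum]
    exact Finset.sum_congr rfl fun i _ => mul_div_assoc _ _ _
  have hts : ∑ c, θ c * s c = N := by
    calc ∑ c, θ c * s c = ∑ c, ∑ i, q i c := by simp only [hqs]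
      _ = ∑ i, ∑ c, q i c := Finset.sum_comm
      _ = ∑ i : Fin N, (1 : ℝ) := Finset.sum_congr rfl fun i _ => hqsum i
      _ = N := by simp
  have hwsum : ∑ c, w c = 1 := by
    have h : ∑ c, w c = (∑ c, θ c * s c) / N := by
      simp only [hwdef, htdef, Finset.sum_div, mul_div_assoc]
    rw [h, hts, div_self hNpos.ne']
  -- rewrite LHS factors
  have hLHS : ∀ i, (∑ z ∈ E i, ∑ c, (expFlow p θ N E c / (N : ℝ)) * p c z)
      = D i * ∑ c, q i c * t c := by
    intro i
    have h1 : (∑ z ∈ E i, ∑ c, (expFlow p θ N E c / (N : ℝ)) * p c z)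
        = ∑ c, (expFlow p θ N E c / (N : ℝ)) * P c i := by
      simp only [hPdef, Finset.mul_sum]
      exact Finset.sum_comm
    rw [h1, Finset.mul_sum]
    refine Finset.sum_congr rfl fun c _ => ?_
    rw [hEF c]
    have hDne : D i ≠ 0 := (hD i).ne'
    have hNne : (N : ℝ) ≠ 0 := hNpos.ne'
    show θ c * s c / ↑N * P c i = D i * (θ c * P c i / D i * (s c / ↑N))
    field_simp
  -- per-observation AM-GM
  set G : Fin N → ℝ := fun i => ∏ c, t c ^ (q i c) with hGdef
  have hG0 : ∀ i, 0 ≤ G i := fun i =>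
    Finset.prod_nonneg fun c _ => Real.rpow_nonneg (ht0 c) _
  have hAMGM : ∀ i, G i ≤ ∑ c, q i c * t c := fun i =>
    Real.geom_mean_le_arith_mean_weighted Finset.univ (q i) t
      (fun c _ => hq0 i c) (hqsum i) (fun c _ => ht0 c)
  -- product of geometric means
  have hGprod : ∏ i, G i = ∏ c, t c ^ (θ c * s c) := by
    rw [hGdef, Finset.prod_comm]
    refine Finset.prod_congr rfl fun c _ => ?_
    rw [← Real.rpow_sum_of_nonneg (ht0 c) (fun i _ => hq0 i c), hqs c]
  -- Gibbs: the key lower bound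
  set S : Finset C := Finset.univ.filter fun c => w c ≠ 0 with hSdef
  have hKS : (1 : ℝ) ≤ ∏ c ∈ S, t c ^ (w c) := by
    have htpos : ∀ c ∈ S, 0 < t c := by
      intro c hc
      rcases (ht0 c).lt_or_eq with h | h
      · exact h
      · exfalso
        have : w c = 0 := by rw [hwdef]; simp [← h]
        simp [hSdef, this] at hc
    have hSsum : ∑ c ∈ S, w c = 1 := by
      rw [hSdef, Finset.sum_filter_ne_zero, hwsum]
    have hstep : ∏ c ∈ S, (t c)⁻¹ ^ (w c) ≤ ∑ c ∈ S, w c * (t c)⁻¹ :=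
      Real.geom_mean_le_arith_mean_weighted S w (fun c => (t c)⁻¹)
        (fun c _ => hw0 c) hSsum (fun c hc => (inv_pos.2 (htpos c hc)).le)
    have hle1 : ∑ c ∈ S, w c * (t c)⁻¹ ≤ 1 := by
      have heq : ∀ c ∈ S, w c * (t c)⁻¹ = θ c := by
        intro c hc
        show θ c * t c * (t c)⁻¹ = θ c
        exact mul_inv_cancel_right₀ (htpos c hc).ne' (θ c)
      rw [Finset.sum_congr rfl heq, ← hθ1]
      exact Finset.sum_le_sum_of_subset_of_nonneg (Finset.filter_subset _ _)
        fun c _ _ => hθ0 c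
    have hinv : ∏ c ∈ S, (t c)⁻¹ ^ (w c) = (∏ c ∈ S, t c ^ (w c))⁻¹ := by
      rw [← Finset.prod_inv_distrib]
      exact Finset.prod_congr rfl fun c hc => Real.inv_rpow (ht0 c) _
    have hpos : 0 < ∏ c ∈ S, t c ^ (w c) :=
      Finset.prod_pos fun c hc => Real.rpow_pos_of_pos (htpos c hc) _
    have := le_trans hstep hle1
    rw [hinv] at this
    exact (inv_le_one₀ hpos).mp this
  have hK1 : (1 : ℝ) ≤ ∏ c, t c ^ (w c) := by
    have : ∏ c, t c ^ (w c) = ∏ c ∈ S, t c ^ (w c) := by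
      symm
      refine Finset.prod_subset (Finset.subset_univ S) fun c _ hc => ?_
      have : w c = 0 := by
        by_contra h
        exact hc (Finset.mem_filter.2 ⟨Finset.mem_univ c, h⟩)
      rw [this, Real.rpow_zero]
    rw [this]
    exact hKS
  have hGibbs : (1 : ℝ) ≤ ∏ c, t c ^ (θ c * s c) := by
    have heq : ∀ c, t c ^ (θ c * s c) = (t c ^ (w c)) ^ N := by
      intro c
      have h1 : θ c * s c = w c * N := by
        show θ c * s c = θ c * (s c / ↑N) * ↑N
        field_simp
      rw [h1, ← Real.rpow_natCast (t c ^ w c) N, ← Real.rpow_mul (ht0 c)]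
    calc (1 : ℝ) = 1 ^ N := (one_pow N).symm
      _ ≤ (∏ c, t c ^ (w c)) ^ N := pow_le_pow_left₀ zero_le_one hK1 N
      _ = ∏ c, (t c ^ (w c)) ^ N := (Finset.prod_pow _ _ _).symm
      _ = ∏ c, t c ^ (θ c * s c) := Finset.prod_congr rfl fun c _ => (heq c).symm
  -- assemble
  calc ∏ i, ∑ z ∈ E i, ∑ c, (expFlow p θ N E c / (N : ℝ)) * p c z
      = ∏ i, D i * ∑ c, q i c * t c := Finset.prod_congr rfl fun i _ => hLHS i
    _ ≥ ∏ i, D i * G i := by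
        refine Finset.prod_le_prod (fun i _ => mul_nonneg (hD i).le (hG0 i))
          (fun i _ => mul_le_mul_of_nonneg_left (hAMGM i) (hD i).le)
    _ = (∏ i, D i) * ∏ i, G i := Finset.prod_mul_distrib
    _ = (∏ i, D i) * ∏ c, t c ^ (θ c * s c) := by rw [hGprod]
    _ ≥ (∏ i, D i) * 1 := by
        exact mul_le_mul_of_nonneg_left hGibbs
          (Finset.prod_nonneg fun i _ => (hD i).le)
    _ = ∏ i, D i := mul_one _
end

section
/- Likelihood dominance of the latent-fair-decision family: let S, D be Boolean and X range over a finite nonempty type, and let (s_1,x_1,d_1), …, (s_N,x_N,d_N) be a finite dataset of samples in S×X×D. Then the supremum, over all pmfs q on S×X×D×Df (Df Boolean) satisfying the fair-model independencies, of the likelihood Π_{i=1}^N r_q(s_i,x_i,d_i) of the dataset under the marginal r_q of q over (S,X,D), is at least the supremum, over all pmfs p on S×X×D under which D is independent of S, of the likelihood Π_{i=1}^N p(s_i,x_i,d_i). That is, on any dataset the latent-variable fair model achieves marginal likelihood at least as high as any fair model without a latent decision variable. -/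
/-- Likelihood dominance of the latent-fair-decision family: on any finite dataset over
`(S, X, D)`, the supremum of the dataset likelihood under `(S,X,D)`-marginals of pmfs `q`
over `(S, X, D, Df)` satisfying the fair-model independencies is at least the supremum of
the dataset likelihood under pmfs `p` over `(S, X, D)` in which `D` is independent of `S`. -/
theorem latent_fair_family_likelihood_dominance
    {X : Type*} [Fintype X] [Nonempty X]
    (N : ℕ) (data : Fin N → Bool × X × Bool) :
    sSup {L : ℝ | ∃ p : Bool × X × Bool → ℝ,
        IsPMF p ∧
        (∀ s d : Bool, (∑ x, p (s, x, d)) =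
          (∑ x, ∑ d', p (s, x, d')) * (∑ s', ∑ x, p (s', x, d))) ∧
        L = ∏ i, p (data i)} ≤
      sSup {L : ℝ | ∃ q : Bool × X × Bool × Bool → ℝ,
        IsPMF q ∧ FairIndep q ∧
        L = ∏ i, ∑ df, q ((data i).1, (data i).2.1, (data i).2.2, df)} := by
  classical
  set B : Set ℝ := {L : ℝ | ∃ q : Bool × X × Bool × Bool → ℝ,
        IsPMF q ∧ FairIndep q ∧
        L = ∏ i, ∑ df, q ((data i).1, (data i).2.1, (data i).2.2, df)} with hB
  have hcardX : (0:ℝ) < Fintype.card X := by exact_mod_cast Fintype.card_pos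
  -- B is bounded above by 1
  have hBdd : ∀ L ∈ B, L ≤ 1 := by
    rintro L ⟨q, ⟨hq0, hq1⟩, _, rfl⟩
    apply Finset.prod_le_one
    · intro i _
      apply Finset.sum_nonneg; intro df _; exact hq0 _
    · intro i _
      obtain ⟨s0, x0, d0⟩ := data i
      calc ∑ df, q (s0, x0, d0, df)
          ≤ ∑ d, ∑ df, q (s0, x0, d, df) :=
            Finset.single_le_sum (f := fun d => ∑ df, q (s0, x0, d, df))
              (fun d _ => Finset.sum_nonneg fun df _ => hq0 _) (Finset.mem_univ d0)
        _ ≤ ∑ x, ∑ d, ∑ df, q (s0, x, d, df) :=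
            Finset.single_le_sum (f := fun x => ∑ d, ∑ df, q (s0, x, d, df))
              (fun x _ => Finset.sum_nonneg fun d _ => Finset.sum_nonneg fun df _ => hq0 _)
              (Finset.mem_univ x0)
        _ ≤ ∑ s, ∑ x, ∑ d, ∑ df, q (s, x, d, df) :=
            Finset.single_le_sum (f := fun s => ∑ x, ∑ d, ∑ df, q (s, x, d, df))
              (fun s _ => Finset.sum_nonneg fun x _ => Finset.sum_nonneg fun d _ =>
                Finset.sum_nonneg fun df _ => hq0 _)
              (Finset.mem_univ s0)
        _ = ∑ t : Bool × X × Bool × Bool, q t := by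
            simp [Fintype.sum_prod_type]
        _ = 1 := hq1
  have hBddAbove : BddAbove B := ⟨1, fun L hL => hBdd L hL⟩
  -- B is nonempty with a nonnegative element (uniform q)
  have hBne : ∃ L0 ∈ B, (0:ℝ) ≤ L0 := by
    refine ⟨_, ⟨fun _ => ((8:ℝ) * Fintype.card X)⁻¹, ⟨fun _ => by positivity, ?_⟩,
      ⟨fun _ _ _ => (Fintype.card X : ℝ)⁻¹, fun _ _ _ => (2:ℝ)⁻¹, fun _ _ _ => by positivity,
        fun s df => by simp [Finset.sum_const, Finset.card_univ]; try field_simp,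
        fun _ _ _ => by norm_num, fun s df => by simp, ?_⟩, rfl⟩, ?_⟩
    · simp [Finset.sum_const, Fintype.card_prod]
      field_simp; ring
    · intro s x d df
      simp [Finset.sum_const, Fintype.card_prod]
      field_simp; ring
    · exact Finset.prod_nonneg fun i _ => Finset.sum_nonneg fun df _ => by positivity
  obtain ⟨L0, hL0B, hL00⟩ := hBne
  have hsSupB0 : (0:ℝ) ≤ sSup B := hL00.trans (le_csSup hBddAbove hL0B)
  apply Real.sSup_le _ hsSupB0
  rintro L ⟨p, ⟨hp0, hp1⟩, hind, rfl⟩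
  -- construct q
  set pS : Bool → ℝ := fun s => ∑ x, ∑ d', p (s, x, d') with hpS
  set pD : Bool → ℝ := fun d => ∑ s', ∑ x, p (s', x, d) with hpD
  set q : Bool × X × Bool × Bool → ℝ :=
    fun t => if t.2.2.2 = t.2.2.1 then p (t.1, t.2.1, t.2.2.1) else 0 with hqdef
  have hmarg : ∀ s x d, ∑ df, q (s, x, d, df) = p (s, x, d) := by
    intro s x d; simp [hqdef]
  have hpSnn : ∀ s, 0 ≤ pS s :=
    fun s => Finset.sum_nonneg fun x _ => Finset.sum_nonneg fun d _ => hp0 _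
  have hpDnn : ∀ d, 0 ≤ pD d :=
    fun d => Finset.sum_nonneg fun s _ => Finset.sum_nonneg fun x _ => hp0 _
  have hle_pS : ∀ s x d, p (s, x, d) ≤ pS s := by
    intro s x d
    calc p (s, x, d) ≤ ∑ d', p (s, x, d') :=
          Finset.single_le_sum (f := fun d' => p (s, x, d')) (fun d' _ => hp0 _) (Finset.mem_univ d)
      _ ≤ pS s := Finset.single_le_sum (f := fun x' => ∑ d', p (s, x', d'))
          (fun x' _ => Finset.sum_nonneg fun d' _ => hp0 _) (Finset.mem_univ x)
  have hle_pD : ∀ s x d, p (s, x, d) ≤ pD d := by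
    intro s x d
    calc p (s, x, d) ≤ ∑ x', p (s, x', d) :=
          Finset.single_le_sum (f := fun x' => p (s, x', d)) (fun x' _ => hp0 _) (Finset.mem_univ x)
      _ ≤ pD d := Finset.single_le_sum (f := fun s' => ∑ x', p (s', x', d))
          (fun s' _ => Finset.sum_nonneg fun x' _ => hp0 _) (Finset.mem_univ s)
  -- marginals of q
  have hqS : ∀ s, ∑ x', ∑ d', ∑ df', q (s, x', d', df') = pS s := by
    intro s
    simp only [hmarg]
    rfl
  have hqF : ∀ df, ∑ s', ∑ x', ∑ d', q (s', x', d', df) = pD df := by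
    intro df
    have : ∀ s' x', ∑ d', q (s', x', d', df) = p (s', x', df) := by
      intro s' x'; simp [hqdef]
    simp only [this]
    rfl
  have hq0 : ∀ t, 0 ≤ q t := by
    intro t; simp only [hqdef]; split
    · exact hp0 _
    · exact le_refl 0
  have hq1 : ∑ t, q t = 1 := by
    rw [Fintype.sum_prod_type]
    simp only [Fintype.sum_prod_type, hmarg]
    rw [← hp1, Fintype.sum_prod_type]
    simp [Fintype.sum_prod_type]
  -- the conditional families
  set a : Bool → Bool → X → ℝ := fun s df x =>
    if pS s * pD df = 0 then (Fintype.card X : ℝ)⁻¹ else p (s, x, df) / (pS s * pD df)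
    with hadef
  set b : Bool → Bool → Bool → ℝ := fun _ df d => if d = df then 1 else 0 with hbdef
  have hFI : FairIndep q := by
    refine ⟨a, b, ?_, ?_, ?_, ?_, ?_⟩
    · intro s df x; simp only [hadef]; split
      · positivity
      · exact div_nonneg (hp0 _) (mul_nonneg (hpSnn s) (hpDnn df))
    · intro s df
      by_cases h : pS s * pD df = 0
      · simp only [hadef, if_pos h, Finset.sum_const, Finset.card_univ, nsmul_eq_mul]
        field_simp
      · simp only [hadef, if_neg h]
        rw [← Finset.sum_div, hind s df, div_self h]
    · intro s df d; simp only [hbdef]; split <;> norm_num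
    · intro s df; simp [hbdef]
    · intro s x d df
      rw [hqS s, hqF df]
      simp only [hqdef, hadef, hbdef]
      by_cases hd : df = d
      · subst hd
        simp only [if_pos rfl]
        by_cases h : pS s * pD df = 0
        · have hz : p (s, x, df) = 0 := by
            rcases mul_eq_zero.mp h with h1 | h1
            · exact le_antisymm (h1 ▸ hle_pS s x df) (hp0 _)
            · exact le_antisymm (h1 ▸ hle_pD s x df) (hp0 _)
          rw [hz, if_pos h, h]
          simp
        · rw [if_neg h]
          simp only [↓reduceIte, mul_one]
          rw [mul_div_assoc', mul_div_right_comm, div_self h, one_mul]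
      · rw [if_neg hd, if_neg (Ne.symm hd)]
        ring
  refine le_csSup hBddAbove ?_
  refine ⟨q, ⟨hq0, hq1⟩, hFI, ?_⟩
  apply Finset.prod_congr rfl
  intro i _
  rw [hmarg]
end
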